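/- Let φ:(0,∞)→(0,∞) be twice continuously differentiable and let h(x) := log(1/φ(e^{−eˣ})) for x ∈ ℝ. Assume that h'(x) → δ and h''(x) → 0 as x → ∞ for some δ ∈ [0,1], that xφ(e^{−x}) → c ∈ (0,∞] as x → ∞, and that δ = 1 whenever c < ∞. Then, with the convention 1/∞ = 0, one has φ'(1/u)/(u·φ(1/u)²) → 1/c and φ''(1/u)/(u²·φ(1/u)²) → −1/c as u → ∞. -/

import Mathlib

open Real MeasureTheory Filter Set Topology

private lemma stmt1_aux1 (L u P d : ℝ) (hL : L ≠ 0) (hu : u ≠ 0) (hP : P ≠ 0) :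
    L * (u⁻¹ * d) / P * (L * P)⁻¹ = d / (u * P ^ 2) := by
  field_simp

private lemma stmt1_aux2 (L u P d dd : ℝ) (hL : L ≠ 0) (hu : u ≠ 0) (hP : P ≠ 0) :
    (L * (u⁻¹ * d) / P + L * (u⁻¹ * d) / P * (L * (u⁻¹ * d) / P)
      - ((L * (u⁻¹ * d) + L * ((-(L * u⁻¹)) * d + u⁻¹ * (dd * (-(L * u⁻¹))))) * P
          - L * (u⁻¹ * d) * (d * (-(L * u⁻¹)))) / P ^ 2)
      * (L⁻¹ * (L * P)⁻¹) - L * (u⁻¹ * d) / P * (L * P)⁻¹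
    = dd / (u ^ 2 * P ^ 2) := by
  field_simp
  ring

set_option maxHeartbeats 1000000 in
/-- key derivative limits for the smooth equivalent function φ. -/
theorem stmt_1
    (φ : ℝ → ℝ) (hφpos : ∀ x > (0:ℝ), 0 < φ x)
    (hφC2 : ContDiffOn ℝ 2 φ (Ioi 0))
    (δ : ℝ) (hδ0 : 0 ≤ δ) (hδ1 : δ ≤ 1)
    (hh1 : Tendsto (deriv (fun x => Real.log (1 / φ (Real.exp (-(Real.exp x))))))
      atTop (𝓝 δ))
    (hh2 : Tendsto (deriv (deriv (fun x => Real.log (1 / φ (Real.exp (-(Real.exp x)))))))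
      atTop (𝓝 0))
    (c : ENNReal) (hc0 : 0 < c)
    (hc : Tendsto (fun x => ENNReal.ofReal (x * φ (Real.exp (-x)))) atTop (𝓝 c))
    (hδc : c < ⊤ → δ = 1) :
    Tendsto (fun u => deriv φ (1 / u) / (u * (φ (1 / u)) ^ 2)) atTop (𝓝 ((1 / c).toReal)) ∧
    Tendsto (fun u => deriv (deriv φ) (1 / u) / (u ^ 2 * (φ (1 / u)) ^ 2)) atTop
      (𝓝 (-(1 / c).toReal)) := by
  have htpos : ∀ x : ℝ, (0:ℝ) < Real.exp (-(Real.exp x)) := fun x => Real.exp_pos _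
  have hφdiff : ∀ y ∈ Ioi (0:ℝ), HasDerivAt φ (deriv φ y) y := by
    intro y hy
    exact ((hφC2.differentiableOn (by norm_num)).differentiableAt
      (isOpen_Ioi.mem_nhds hy)).hasDerivAt
  have hφ'C1 : ContDiffOn ℝ 1 (deriv φ) (Ioi 0) :=
    hφC2.deriv_of_isOpen isOpen_Ioi (by norm_num)
  have hφ'diff : ∀ y ∈ Ioi (0:ℝ), HasDerivAt (deriv φ) (deriv (deriv φ) y) y := by
    intro y hy
    exact ((hφ'C1.differentiableOn one_ne_zero).differentiableAt
      (isOpen_Ioi.mem_nhds hy)).hasDerivAt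
  have htder : ∀ x : ℝ, HasDerivAt (fun x => Real.exp (-(Real.exp x)))
      (-(Real.exp x * Real.exp (-(Real.exp x)))) x := by
    intro x
    have h1 : HasDerivAt (fun x : ℝ => -(Real.exp x)) (-Real.exp x) x :=
      (Real.hasDerivAt_exp x).neg
    have h2 := (Real.hasDerivAt_exp (-(Real.exp x))).comp x h1
    refine h2.congr_deriv ?_
    ring
  -- the first derivative of h
  have hhd : ∀ x : ℝ, HasDerivAt (fun x => Real.log (1 / φ (Real.exp (-(Real.exp x)))))
      (Real.exp x * (Real.exp (-(Real.exp x)) * deriv φ (Real.exp (-(Real.exp x)))) /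
        φ (Real.exp (-(Real.exp x)))) x := by
    intro x
    have hne : φ (Real.exp (-(Real.exp x))) ≠ 0 := (hφpos _ (htpos x)).ne'
    have h1 : HasDerivAt (fun x => φ (Real.exp (-(Real.exp x))))
        (deriv φ (Real.exp (-(Real.exp x))) * (-(Real.exp x * Real.exp (-(Real.exp x))))) x :=
      (hφdiff _ (htpos x)).comp x (htder x)
    have h2 := (h1.log hne).neg
    have heq : (fun x => Real.log (1 / φ (Real.exp (-(Real.exp x)))))
        = fun x => -Real.log (φ (Real.exp (-(Real.exp x)))) := by
      funext y; rw [one_div, Real.log_inv]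
    rw [heq]
    refine h2.congr_deriv ?_
    field_simp
  have hderiv_h : deriv (fun x => Real.log (1 / φ (Real.exp (-(Real.exp x)))))
      = fun x => Real.exp x * (Real.exp (-(Real.exp x)) * deriv φ (Real.exp (-(Real.exp x)))) /
        φ (Real.exp (-(Real.exp x))) := funext fun x => (hhd x).deriv
  -- second derivative
  have hD2 : ∀ x : ℝ, HasDerivAt
      (fun x => Real.exp x * (Real.exp (-(Real.exp x)) * deriv φ (Real.exp (-(Real.exp x)))) /
        φ (Real.exp (-(Real.exp x))))
      (((Real.exp x * (Real.exp (-(Real.exp x)) * deriv φ (Real.exp (-(Real.exp x))))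
          + Real.exp x * ((-(Real.exp x * Real.exp (-(Real.exp x)))) * deriv φ (Real.exp (-(Real.exp x)))
            + Real.exp (-(Real.exp x)) * (deriv (deriv φ) (Real.exp (-(Real.exp x)))
              * (-(Real.exp x * Real.exp (-(Real.exp x))))))) * φ (Real.exp (-(Real.exp x)))
        - Real.exp x * (Real.exp (-(Real.exp x)) * deriv φ (Real.exp (-(Real.exp x))))
          * (deriv φ (Real.exp (-(Real.exp x))) * (-(Real.exp x * Real.exp (-(Real.exp x))))))
        / (φ (Real.exp (-(Real.exp x)))) ^ 2) x := by
    intro x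
    have hne : φ (Real.exp (-(Real.exp x))) ≠ 0 := (hφpos _ (htpos x)).ne'
    have hd' : HasDerivAt (fun x => deriv φ (Real.exp (-(Real.exp x))))
        (deriv (deriv φ) (Real.exp (-(Real.exp x))) * (-(Real.exp x * Real.exp (-(Real.exp x))))) x :=
      HasDerivAt.comp (h₂ := deriv φ) x (hφ'diff _ (htpos x)) (htder x)
    have hN : HasDerivAt
        (fun x => Real.exp x * (Real.exp (-(Real.exp x)) * deriv φ (Real.exp (-(Real.exp x)))))
        (Real.exp x * (Real.exp (-(Real.exp x)) * deriv φ (Real.exp (-(Real.exp x))))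
          + Real.exp x * ((-(Real.exp x * Real.exp (-(Real.exp x)))) * deriv φ (Real.exp (-(Real.exp x)))
            + Real.exp (-(Real.exp x)) * (deriv (deriv φ) (Real.exp (-(Real.exp x)))
              * (-(Real.exp x * Real.exp (-(Real.exp x))))))) x :=
      (Real.hasDerivAt_exp x).mul ((htder x).mul hd')
    have hP : HasDerivAt (fun x => φ (Real.exp (-(Real.exp x))))
        (deriv φ (Real.exp (-(Real.exp x))) * (-(Real.exp x * Real.exp (-(Real.exp x))))) x :=
      (hφdiff _ (htpos x)).comp x (htder x)
    exact hN.div hP hne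
  have hderiv2_h : deriv (deriv (fun x => Real.log (1 / φ (Real.exp (-(Real.exp x))))))
      = fun x => ((Real.exp x * (Real.exp (-(Real.exp x)) * deriv φ (Real.exp (-(Real.exp x))))
          + Real.exp x * ((-(Real.exp x * Real.exp (-(Real.exp x)))) * deriv φ (Real.exp (-(Real.exp x)))
            + Real.exp (-(Real.exp x)) * (deriv (deriv φ) (Real.exp (-(Real.exp x)))
              * (-(Real.exp x * Real.exp (-(Real.exp x))))))) * φ (Real.exp (-(Real.exp x)))
        - Real.exp x * (Real.exp (-(Real.exp x)) * deriv φ (Real.exp (-(Real.exp x))))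
          * (deriv φ (Real.exp (-(Real.exp x))) * (-(Real.exp x * Real.exp (-(Real.exp x))))))
        / (φ (Real.exp (-(Real.exp x)))) ^ 2 := by
    rw [hderiv_h]
    exact funext fun x => (hD2 x).deriv
  have hloglog : Tendsto (fun u : ℝ => Real.log (Real.log u)) atTop atTop :=
    Real.tendsto_log_atTop.comp Real.tendsto_log_atTop
  -- the key quantities in the variable u
  have ha : Tendsto (fun u : ℝ => Real.log u * (u⁻¹ * deriv φ u⁻¹) / φ u⁻¹) atTop (𝓝 δ) := by
    refine (hh1.comp hloglog).congr' ?_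
    filter_upwards [eventually_gt_atTop (1:ℝ)] with u hu
    have hu0 : (0:ℝ) < u := lt_trans one_pos hu
    have hlx : Real.exp (Real.log (Real.log u)) = Real.log u := Real.exp_log (Real.log_pos hu)
    simp only [Function.comp_apply, hderiv_h]
    rw [hlx, Real.exp_neg, Real.exp_log hu0]
  have hE : Tendsto (fun u : ℝ =>
      ((Real.log u * (u⁻¹ * deriv φ u⁻¹)
          + Real.log u * ((-(Real.log u * u⁻¹)) * deriv φ u⁻¹
            + u⁻¹ * (deriv (deriv φ) u⁻¹ * (-(Real.log u * u⁻¹))))) * φ u⁻¹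
        - Real.log u * (u⁻¹ * deriv φ u⁻¹) * (deriv φ u⁻¹ * (-(Real.log u * u⁻¹))))
        / (φ u⁻¹) ^ 2) atTop (𝓝 0) := by
    refine (hh2.comp hloglog).congr' ?_
    filter_upwards [eventually_gt_atTop (1:ℝ)] with u hu
    have hu0 : (0:ℝ) < u := lt_trans one_pos hu
    have hlx : Real.exp (Real.log (Real.log u)) = Real.log u := Real.exp_log (Real.log_pos hu)
    simp only [Function.comp_apply, hderiv2_h]
    rw [hlx, Real.exp_neg, Real.exp_log hu0]
  have hmE : Tendsto (fun u : ℝ => ENNReal.ofReal (Real.log u * φ u⁻¹)) atTop (𝓝 c) := by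
    refine (hc.comp Real.tendsto_log_atTop).congr' ?_
    filter_upwards [eventually_gt_atTop (1:ℝ)] with u hu
    have hu0 : (0:ℝ) < u := lt_trans one_pos hu
    simp only [Function.comp_apply]
    rw [Real.exp_neg, Real.exp_log hu0]
  have hcinv_ne : (c⁻¹ : ENNReal) ≠ ⊤ := by
    simp [ENNReal.inv_ne_top, hc0.ne']
  have hm : Tendsto (fun u : ℝ => (Real.log u * φ u⁻¹)⁻¹) atTop (𝓝 ((1/c).toReal)) := by
    have h1 : Tendsto (fun u : ℝ => (ENNReal.ofReal (Real.log u * φ u⁻¹))⁻¹) atTop (𝓝 c⁻¹) :=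
      hmE.inv
    have h2 := (ENNReal.tendsto_toReal hcinv_ne).comp h1
    rw [show (1/c).toReal = (c⁻¹).toReal by rw [one_div]]
    refine h2.congr' ?_
    filter_upwards [eventually_gt_atTop (1:ℝ)] with u hu
    have hu0 : (0:ℝ) < u := lt_trans one_pos hu
    have hP : 0 < φ u⁻¹ := hφpos _ (by positivity)
    have hl : 0 < Real.log u := Real.log_pos hu
    have hm0 : 0 ≤ Real.log u * φ u⁻¹ := le_of_lt (mul_pos hl hP)
    simp [Function.comp_apply, ENNReal.toReal_inv, ENNReal.toReal_ofReal hm0]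
  have hxinv : Tendsto (fun u : ℝ => (Real.log u)⁻¹) atTop (𝓝 0) :=
    tendsto_inv_atTop_zero.comp Real.tendsto_log_atTop
  have hkey : δ * (1/c).toReal = (1/c).toReal := by
    by_cases hct : c = ⊤
    · simp [hct]
    · rw [hδc (lt_top_iff_ne_top.mpr hct)]; ring
  constructor
  · -- first limit
    have h1 : Tendsto (fun u : ℝ => (Real.log u * (u⁻¹ * deriv φ u⁻¹) / φ u⁻¹)
        * (Real.log u * φ u⁻¹)⁻¹) atTop (𝓝 (δ * (1/c).toReal)) := ha.mul hm
    rw [hkey] at h1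
    refine h1.congr' ?_
    filter_upwards [eventually_gt_atTop (1:ℝ)] with u hu
    have hu0 : (0:ℝ) < u := lt_trans one_pos hu
    have hP : 0 < φ u⁻¹ := hφpos _ (by positivity)
    have hl : 0 < Real.log u := Real.log_pos hu
    have hl' : Real.log u ≠ 0 := ne_of_gt hl
    have hP' : φ u⁻¹ ≠ 0 := ne_of_gt hP
    have hu' : u ≠ 0 := ne_of_gt hu0
    rw [one_div]
    exact stmt1_aux1 (Real.log u) u (φ u⁻¹) (deriv φ u⁻¹) hl' hu' hP'
  · -- second limit
    have h1 : Tendsto (fun u : ℝ =>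
        ((Real.log u * (u⁻¹ * deriv φ u⁻¹) / φ u⁻¹)
          + (Real.log u * (u⁻¹ * deriv φ u⁻¹) / φ u⁻¹) * (Real.log u * (u⁻¹ * deriv φ u⁻¹) / φ u⁻¹)
          - ((Real.log u * (u⁻¹ * deriv φ u⁻¹)
              + Real.log u * ((-(Real.log u * u⁻¹)) * deriv φ u⁻¹
                + u⁻¹ * (deriv (deriv φ) u⁻¹ * (-(Real.log u * u⁻¹))))) * φ u⁻¹
            - Real.log u * (u⁻¹ * deriv φ u⁻¹) * (deriv φ u⁻¹ * (-(Real.log u * u⁻¹))))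
            / (φ u⁻¹) ^ 2)
          * ((Real.log u)⁻¹ * (Real.log u * φ u⁻¹)⁻¹)
          - (Real.log u * (u⁻¹ * deriv φ u⁻¹) / φ u⁻¹) * (Real.log u * φ u⁻¹)⁻¹)
        atTop (𝓝 ((δ + δ * δ - 0) * (0 * (1/c).toReal) - δ * (1/c).toReal)) :=
      (((ha.add (ha.mul ha)).sub hE).mul (hxinv.mul hm)).sub (ha.mul hm)
    rw [show (δ + δ * δ - 0) * (0 * (1/c).toReal) - δ * (1/c).toReal = -(δ * (1/c).toReal) by ring,
      hkey] at h1
    refine h1.congr' ?_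
    filter_upwards [eventually_gt_atTop (1:ℝ)] with u hu
    have hu0 : (0:ℝ) < u := lt_trans one_pos hu
    have hP : 0 < φ u⁻¹ := hφpos _ (by positivity)
    have hl : 0 < Real.log u := Real.log_pos hu
    have hl' : Real.log u ≠ 0 := ne_of_gt hl
    have hP' : φ u⁻¹ ≠ 0 := ne_of_gt hP
    have hu' : u ≠ 0 := ne_of_gt hu0
    rw [one_div]
    exact stmt1_aux2 (Real.log u) u (φ u⁻¹) (deriv φ u⁻¹) (deriv (deriv φ) u⁻¹) hl' hu' hP'
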